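/- arXiv:0903.4634 — 3 statements merged into one kernel-verified Lean document; each statement's English description precedes it below -/
import Mathlib

section
/- Let s, t ≥ 1 be natural numbers and let w, w' ∈ Row(s,t) be two vectors each having at least one nonzero entry. Then w and w' are cyclic permutations of each other if and only if their pair sequences pairs(w) and pairs(w') are cyclic permutations of each other (as finite sequences of pairs of positive integers). -/
/-- The list of positions of the nonzero entries of `w`. -/
def nzPos (w : List ℕ) : List ℕ :=
  (List.range w.length).filter (fun i => w.getD i 0 ≠ 0)

/-- The pair sequence of `w`: each nonzero entry of `w` together with the cyclic
distance from its position to the next nonzero position. -/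
def pairsOf (w : List ℕ) : List (ℕ × ℕ) :=
  (List.range (nzPos w).length).map (fun j =>
    (w.getD ((nzPos w).getD j 0) 0,
     if j + 1 = (nzPos w).length then (nzPos w).getD 0 0 + w.length - (nzPos w).getD j 0
     else (nzPos w).getD (j + 1) 0 - (nzPos w).getD j 0))

/-- distance to next nonzero position -/
def nextD (s first i : ℕ) : List ℕ → ℕ
  | [] => first + s - i
  | j :: _ => j - i

/-- structural version of the pair sequence -/
def pairsFrom (s first : ℕ) (g : ℕ → ℕ) : List ℕ → List (ℕ × ℕ)
  | [] => []
  | i :: rest => (g i, nextD s first i rest) :: pairsFrom s first g rest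

lemma F_eq (s first : ℕ) (g : ℕ → ℕ) (P : List ℕ) :
    (List.range P.length).map (fun j =>
      (g (P.getD j 0),
       if j + 1 = P.length then first + s - P.getD j 0
       else P.getD (j + 1) 0 - P.getD j 0)) = pairsFrom s first g P := by
  induction P with
  | nil => simp [pairsFrom]
  | cons i rest ih =>
    rw [List.length_cons, List.range_succ_eq_map, List.map_cons, List.map_map]
    have h0 : (g ((i :: rest).getD 0 0),
        if 0 + 1 = rest.length + 1 then first + s - (i :: rest).getD 0 0
        else (i :: rest).getD (0 + 1) 0 - (i :: rest).getD 0 0)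
        = (g i, nextD s first i rest) := by
      cases rest with
      | nil => simp [nextD]
      | cons j r => simp [nextD]
    rw [h0]
    have h1 : (List.range rest.length).map ((fun j =>
        (g ((i :: rest).getD j 0),
         if j + 1 = rest.length + 1 then first + s - (i :: rest).getD j 0
         else (i :: rest).getD (j + 1) 0 - (i :: rest).getD j 0)) ∘ Nat.succ)
        = (List.range rest.length).map (fun j =>
        (g (rest.getD j 0),
         if j + 1 = rest.length then first + s - rest.getD j 0
         else rest.getD (j + 1) 0 - rest.getD j 0)) := by
      apply List.map_congr_left
      intro k _
      simp only [Function.comp_apply, Nat.succ_eq_add_one]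
      have : k + 1 + 1 = rest.length + 1 ↔ k + 1 = rest.length := by omega
      rcases eq_or_ne (k + 1) rest.length with h | h
      · rw [if_pos (by omega), if_pos h]
        simp [List.getD_cons_succ]
      · rw [if_neg (by omega), if_neg h]
        simp [List.getD_cons_succ]
    rw [h1, ih]
    rfl

lemma pairsOf_eq (w : List ℕ) :
    pairsOf w = pairsFrom w.length ((nzPos w).getD 0 0) (fun k => w.getD k 0) (nzPos w) := by
  rw [pairsOf]; exact F_eq w.length ((nzPos w).getD 0 0) (fun k => w.getD k 0) (nzPos w)

lemma mem_nzPos {w : List ℕ} {i : ℕ} : i ∈ nzPos w ↔ i < w.length ∧ w.getD i 0 ≠ 0 := by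
  simp [nzPos, List.mem_filter, List.mem_range]

lemma nzPos_pairwise (w : List ℕ) : (nzPos w).Pairwise (· < ·) :=
  (List.pairwise_lt_range).filter _

lemma getD_cons_succ' (x : ℕ) (l : List ℕ) (i : ℕ) : (x :: l).getD (i + 1) 0 = l.getD i 0 :=
  List.getD_cons_succ

lemma getD_append_lt (l l' : List ℕ) (i : ℕ) (h : i < l.length) :
    (l ++ l').getD i 0 = l.getD i 0 := List.getD_append _ _ _ _ h

lemma nzPos_cons_zero (l : List ℕ) : nzPos (0 :: l) = (nzPos l).map (· + 1) := by
  rw [nzPos, List.length_cons, List.range_succ_eq_map, List.filter_cons]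
  rw [if_neg (by simp), List.filter_map, nzPos]
  congr 1

lemma nzPos_cons_ne {x : ℕ} (hx : x ≠ 0) (l : List ℕ) :
    nzPos (x :: l) = 0 :: (nzPos l).map (· + 1) := by
  rw [nzPos, List.length_cons, List.range_succ_eq_map, List.filter_cons]
  rw [if_pos (by simpa [List.getD_cons_zero])]
  rw [List.filter_map, nzPos]
  congr 2

lemma nzPos_append_zero (l : List ℕ) : nzPos (l ++ [0]) = nzPos l := by
  rw [nzPos, List.length_append, List.length_singleton, List.range_succ, List.filter_append]
  have h2 : List.filter (fun i => decide ((l ++ [0]).getD i 0 ≠ 0)) [l.length] = [] := by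
    simp [List.getD_append_right, le_refl]
  rw [h2, List.append_nil, nzPos]
  apply List.filter_congr
  intro i hi
  rw [getD_append_lt _ _ _ (List.mem_range.mp hi)]

lemma nzPos_append_ne {x : ℕ} (hx : x ≠ 0) (l : List ℕ) :
    nzPos (l ++ [x]) = nzPos l ++ [l.length] := by
  rw [nzPos, List.length_append, List.length_singleton, List.range_succ, List.filter_append]
  have h2 : List.filter (fun i => decide ((l ++ [x]).getD i 0 ≠ 0)) [l.length] = [l.length] := by
    simp [List.getD_append_right, le_refl, hx]
  rw [h2, nzPos]
  congr 1
  apply List.filter_congr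
  intro i hi
  rw [getD_append_lt _ _ _ (List.mem_range.mp hi)]

lemma pairsFrom_congr {s f : ℕ} {g g' : ℕ → ℕ} {P : List ℕ}
    (h : ∀ k ∈ P, g k = g' k) : pairsFrom s f g P = pairsFrom s f g' P := by
  induction P with
  | nil => rfl
  | cons i rest ih =>
    rw [pairsFrom, pairsFrom, h i (by simp), ih (fun k hk => h k (by simp [hk]))]

lemma pairsFrom_shift (s first : ℕ) (g : ℕ → ℕ) (P : List ℕ) :
    pairsFrom s (first + 1) g (P.map (· + 1)) = pairsFrom s first (fun k => g (k + 1)) P := by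
  induction P with
  | nil => rfl
  | cons i rest ih =>
    rw [List.map_cons, pairsFrom, pairsFrom, ih]
    congr 1
    cases rest with
    | nil => simp [nextD]; omega
    | cons j r => simp [nextD]

lemma pairsFrom_append_last (m h : ℕ) (g : ℕ → ℕ) (P : List ℕ) :
    pairsFrom (m + 1) h g (P ++ [m]) =
      pairsFrom (m + 1) 0 (fun k => g (k - 1)) (P.map (· + 1)) ++ [(g m, h + 1)] := by
  induction P with
  | nil =>
    simp only [List.nil_append, List.map_nil, pairsFrom, nextD]
    congr 2
    omega
  | cons i rest ih =>
    rw [List.cons_append, List.map_cons]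
    rw [show pairsFrom (m+1) h g (i :: (rest ++ [m]))
        = (g i, nextD (m+1) h i (rest ++ [m])) :: pairsFrom (m+1) h g (rest ++ [m]) from rfl]
    rw [show pairsFrom (m+1) 0 (fun k => g (k-1)) ((i+1) :: rest.map (· + 1))
        = (g (i+1-1), nextD (m+1) 0 (i+1) (rest.map (· + 1)))
          :: pairsFrom (m+1) 0 (fun k => g (k-1)) (rest.map (· + 1)) from rfl]
    rw [ih, List.cons_append]
    congr 2
    cases rest with
    | nil => simp [nextD]
    | cons j r => simp [nextD]

lemma pairsOf_cons_zero (l : List ℕ) : pairsOf (l ++ [0]) = pairsOf (0 :: l) := by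
  rw [pairsOf_eq, pairsOf_eq, nzPos_append_zero, nzPos_cons_zero]
  cases hP : nzPos l with
  | nil => simp [pairsFrom]
  | cons j r =>
    rw [List.map_cons]
    have hlen : (l ++ [0]).length = l.length + 1 := by simp
    have hlen2 : (0 :: l).length = l.length + 1 := by simp
    rw [hlen, hlen2]
    have hgd : (((j + 1) :: List.map (· + 1) r).getD 0 0) = ((j :: r).getD 0 0) + 1 := by simp
    rw [hgd]
    have hmc : (j + 1) :: List.map (· + 1) r = (j :: r).map (· + 1) := by simp
    rw [hmc, pairsFrom_shift]
    apply pairsFrom_congr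
    intro k hk
    rw [← hP] at hk
    rw [List.getD_cons_succ, getD_append_lt _ _ _ (mem_nzPos.mp hk).1]

lemma pairsOf_cons_ne {x : ℕ} (hx : x ≠ 0) (l : List ℕ) :
    pairsOf (l ++ [x]) = (pairsOf (x :: l)).rotate 1 := by
  rw [pairsOf_eq, pairsOf_eq, nzPos_append_ne hx, nzPos_cons_ne hx]
  have hlen : (l ++ [x]).length = l.length + 1 := by simp
  have hlen2 : (x :: l).length = l.length + 1 := by simp
  rw [hlen, hlen2]
  rw [pairsFrom_append_last]
  -- RHS
  rw [List.getD_cons_zero, pairsFrom]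
  rw [List.rotate_cons_succ, List.rotate_zero]
  congr 1
  · apply pairsFrom_congr
    intro k hk
    rcases List.mem_map.mp hk with ⟨j, hj, rfl⟩
    have hjl : j < l.length := (mem_nzPos.mp hj).1
    simp only [Nat.add_sub_cancel]
    rw [getD_append_lt _ _ _ hjl, List.getD_cons_succ]
  · have hgx : (l ++ [x]).getD l.length 0 = x := by
      simp [List.getD_append_right, le_refl]
    rw [hgx]
    cases hP : nzPos l with
    | nil => simp [nextD]
    | cons j r => simp [nextD]

lemma pairsOf_rotate_one (w : List ℕ) : pairsOf (w.rotate 1) ~r pairsOf w := by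
  cases w with
  | nil => exact List.IsRotated.refl _
  | cons x l =>
    rw [show (1 : ℕ) = 0 + 1 from rfl, List.rotate_cons_succ, List.rotate_zero]
    rcases eq_or_ne x 0 with rfl | hx
    · rw [pairsOf_cons_zero]
    · rw [pairsOf_cons_ne hx]
      exact List.IsRotated.symm ⟨1, rfl⟩

lemma pairsOf_rotate (k : ℕ) (w : List ℕ) : pairsOf (w.rotate k) ~r pairsOf w := by
  induction k generalizing w with
  | zero => rw [List.rotate_zero]
  | succ k ih =>
    have : w.rotate (k + 1) = (w.rotate 1).rotate k := by
      rw [List.rotate_rotate]; ring_nf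
    rw [this]
    exact (ih (w.rotate 1)).trans (pairsOf_rotate_one w)

/-- Reconstruct a word from a pair sequence. -/
def decode (ps : List (ℕ × ℕ)) : List ℕ :=
  (ps.map (fun p => p.1 :: List.replicate (p.2 - 1) 0)).flatten

lemma decode_cons (p : ℕ × ℕ) (ps : List (ℕ × ℕ)) :
    decode (p :: ps) = p.1 :: List.replicate (p.2 - 1) 0 ++ decode ps := by
  simp [decode]

lemma decode_append (ps qs : List (ℕ × ℕ)) :
    decode (ps ++ qs) = decode ps ++ decode qs := by
  simp [decode]

lemma decode_rotate_one (ps : List (ℕ × ℕ)) : decode (ps.rotate 1) ~r decode ps := by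
  cases ps with
  | nil => exact List.IsRotated.refl _
  | cons p q =>
    rw [show (1 : ℕ) = 0 + 1 from rfl, List.rotate_cons_succ, List.rotate_zero]
    rw [decode_append, decode_cons, decode_cons]
    simp only [decode, List.map_nil, List.flatten_nil, List.append_nil]
    exact (List.isRotated_append).trans (by rw [List.cons_append])

lemma decode_rotate (k : ℕ) (ps : List (ℕ × ℕ)) : decode (ps.rotate k) ~r decode ps := by
  induction k generalizing ps with
  | zero => rw [List.rotate_zero]
  | succ k ih =>
    have : ps.rotate (k + 1) = (ps.rotate 1).rotate k := by
      rw [List.rotate_rotate]; ring_nf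
    rw [this]
    exact (ih (ps.rotate 1)).trans (decode_rotate_one ps)

/-- a suffix of a word with all entries zero is a replicate of zeros -/
lemma drop_eq_replicate (w : List ℕ) (a : ℕ)
    (h : ∀ j, a ≤ j → j < w.length → w.getD j 0 = 0) :
    w.drop a = List.replicate (w.length - a) 0 := by
  apply List.ext_getElem
  · simp
  · intro k h1 h2
    rw [List.getElem_drop, List.getElem_replicate]
    have hlt : a + k < w.length := by simp at h1; omega
    have := h (a + k) (by omega) hlt
    rwa [List.getD_eq_getElem _ _ hlt] at this

/-- the segment between two consecutive nonzero positions -/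
lemma drop_seg (w : List ℕ) (i j : ℕ) (hij : i < j) (hj : j ≤ w.length)
    (h : ∀ t, i < t → t < j → w.getD t 0 = 0) :
    w.drop i = (w.getD i 0 :: List.replicate (j - i - 1) 0) ++ w.drop j := by
  have hi : i < w.length := lt_of_lt_of_le hij hj
  have h1 : w.drop i = (w.drop i).take (j - i) ++ w.drop j := by
    conv_lhs => rw [← List.take_append_drop (j - i) (w.drop i)]
    rw [List.drop_drop, show i + (j - i) = j by omega]
  rw [h1]
  congr 1
  apply List.ext_getElem
  · simp only [List.length_take, List.length_drop, List.length_cons, List.length_replicate,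
      List.length_append]
    omega
  · intro k h1 h2
    rw [List.getElem_take]
    rw [List.getElem_drop]
    rcases Nat.eq_zero_or_pos k with rfl | hk
    · simp only [Nat.add_zero, List.getElem_cons_zero]
      rw [List.getD_eq_getElem _ _ hi]
    · have hklt : k < j - i := by
        simp only [List.length_take, List.length_drop] at h1
        omega
      have hlt : i + k < w.length := by omega
      obtain ⟨k', rfl⟩ : ∃ k', k = k' + 1 := ⟨k - 1, by omega⟩
      rw [List.getElem_cons_succ, List.getElem_replicate]
      have h0 := h (i + (k' + 1)) (by omega) (by omega)
      rw [List.getD_eq_getElem _ _ hlt] at h0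
      exact h0

lemma decode_pairsFrom (w : List ℕ) (P : List ℕ) : ∀ (i : ℕ),
    ((i :: P).Pairwise (· < ·)) → (∀ j ∈ i :: P, j < w.length) →
    (∀ j, i ≤ j → j < w.length → ((w.getD j 0 ≠ 0) ↔ j ∈ i :: P)) →
    decode (pairsFrom w.length 0 (fun k => w.getD k 0) (i :: P)) = w.drop i := by
  induction P with
  | nil =>
    intro i _ hb hc
    have hi : i < w.length := hb i (by simp)
    rw [show pairsFrom w.length 0 (fun k => w.getD k 0) [i]
        = [(w.getD i 0, nextD w.length 0 i [])] from rfl]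
    rw [decode_cons]
    simp only [decode, List.map_nil, List.flatten_nil, List.append_nil]
    rw [List.drop_eq_getElem_cons hi]
    congr 1
    · rw [List.getD_eq_getElem _ _ hi]
    · rw [drop_eq_replicate w (i + 1) ?_]
      · congr 1
        show 0 + w.length - i - 1 = w.length - (i + 1)
        omega
      · intro j hj hjn
        by_contra hne
        have := (hc j (by omega) hjn).mp hne
        simp at this
        omega
  | cons j P' ih =>
    intro i hpw hb hc
    have hij : i < j := (List.pairwise_cons.mp hpw).1 j (by simp)
    have hjn : j < w.length := hb j (by simp)
    have htail : (j :: P').Pairwise (· < ·) := (List.pairwise_cons.mp hpw).2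
    have hPgt : ∀ a ∈ P', j < a := (List.pairwise_cons.mp htail).1
    rw [show pairsFrom w.length 0 (fun k => w.getD k 0) (i :: j :: P')
        = (w.getD i 0, nextD w.length 0 i (j :: P'))
          :: pairsFrom w.length 0 (fun k => w.getD k 0) (j :: P') from rfl]
    rw [decode_cons]
    rw [ih j htail (fun a ha => hb a (by simp at ha ⊢; tauto)) ?_]
    · rw [show nextD w.length 0 i (j :: P') = j - i from rfl]
      rw [drop_seg w i j hij (le_of_lt hjn) ?_]
      intro t hit htj
      by_contra hne
      have := (hc t (by omega) (by omega)).mp hne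
      simp at this
      rcases this with rfl | rfl | hmem
      · omega
      · omega
      · exact absurd (hPgt t hmem) (by omega)
    · intro a hja han
      constructor
      · intro hne
        have := (hc a (by omega) han).mp hne
        simp at this ⊢
        rcases this with rfl | h' | h'
        · omega
        · left; exact h'
        · right; exact h'
      · intro ha
        exact (hc a (by omega) han).mpr (by simp at ha ⊢; tauto)

lemma decode_pairsOf {x : ℕ} (hx : x ≠ 0) (l : List ℕ) :
    decode (pairsOf (x :: l)) = x :: l := by
  rw [pairsOf_eq, nzPos_cons_ne hx, List.getD_cons_zero]
  rw [decode_pairsFrom (x :: l) ((nzPos l).map (· + 1)) 0 ?_ ?_ ?_]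
  · rw [List.drop_zero]
  · rw [← nzPos_cons_ne hx]
    exact nzPos_pairwise _
  · intro j hj
    rw [← nzPos_cons_ne hx] at hj
    exact (mem_nzPos.mp hj).1
  · intro j _ hjlen
    rw [← nzPos_cons_ne hx, mem_nzPos]
    exact ⟨fun h => ⟨hjlen, h⟩, fun h => h.2⟩

lemma pairsOf_congr {w w' : List ℕ} (h : w ~r w') : pairsOf w ~r pairsOf w' := by
  obtain ⟨k, hk⟩ := h
  rw [← hk]
  exact (pairsOf_rotate k w).symm

/-- Two vectors in `Row(s,t)` with at least one nonzero entry are cyclic permutations of each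
other iff their pair sequences are cyclic permutations of each other. -/
theorem pairs_isRotated_iff (s t : ℕ) (hs : 1 ≤ s) (ht : 1 ≤ t)
    (w w' : List ℕ) (hw : w.length = s) (hw' : w'.length = s)
    (hsum : w.sum = t) (hsum' : w'.sum = t)
    (hnz : ∃ x ∈ w, x ≠ 0) (hnz' : ∃ x ∈ w', x ≠ 0) :
    w ~r w' ↔ pairsOf w ~r pairsOf w' := by
  constructor
  · exact pairsOf_congr
  · intro h
    obtain ⟨x, hxw, hx⟩ := hnz
    obtain ⟨a, b, rfl⟩ := List.append_of_mem hxw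
    obtain ⟨x', hxw', hx'⟩ := hnz'
    obtain ⟨a', b', rfl⟩ := List.append_of_mem hxw'
    have hu : (a ++ x :: b) ~r (x :: (b ++ a)) := by
      rw [← List.cons_append]
      exact List.isRotated_append
    have hu' : (a' ++ x' :: b') ~r (x' :: (b' ++ a')) := by
      rw [← List.cons_append]
      exact List.isRotated_append
    have h1 : pairsOf (x :: (b ++ a)) ~r pairsOf (x' :: (b' ++ a')) :=
      ((pairsOf_congr hu.symm).trans h).trans (pairsOf_congr hu')
    obtain ⟨m, hm⟩ := h1
    have h2 : (x' :: (b' ++ a')) ~r (x :: (b ++ a)) := by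
      rw [← decode_pairsOf hx' (b' ++ a'), ← decode_pairsOf hx (b ++ a), ← hm]
      exact decode_rotate m _
    exact (hu.trans h2.symm).trans hu'.symm
end

section
/- Let s, t ≥ 1 be natural numbers and let ((a_0,b_0),(a_1,b_1),...,(a_k,b_k)) be a finite sequence of pairs of positive integers such that a_0 + a_1 + ... + a_k = t and b_0 + b_1 + ... + b_k = s. Then there exists a vector w ∈ Row(s,t) whose pair sequence pairs(w) is a cyclic permutation of ((a_0,b_0),(a_1,b_1),...,(a_k,b_k)). -/
/-- block for a single pair -/
def blk (q : ℕ × ℕ) : List ℕ := q.1 :: List.replicate (q.2 - 1) 0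

/-- build a row from the pairs -/
def build : List (ℕ × ℕ) → List ℕ
  | [] => []
  | q :: p => blk q ++ build p

/-- positions of block starts -/
def offs : List (ℕ × ℕ) → List ℕ
  | [] => []
  | q :: p => 0 :: (offs p).map (· + q.2)

lemma blk_length (q : ℕ × ℕ) (h : 0 < q.2) : (blk q).length = q.2 := by
  simp [blk]; omega

lemma getD_replicate_zero (m i : ℕ) : (List.replicate m (0:ℕ)).getD i 0 = 0 := by
  rcases lt_or_ge i m with h | h
  · rw [List.getD_eq_getElem _ _ (by simpa using h)]; simp
  · rw [List.getD_eq_default _ _ (by simpa using h)]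

lemma nzPos_append (u v : List ℕ) :
    nzPos (u ++ v) = nzPos u ++ (nzPos v).map (· + u.length) := by
  unfold nzPos
  rw [List.length_append, List.range_add, List.filter_append, List.filter_map]
  congr 1
  · apply List.filter_congr
    intro i hi
    rw [List.mem_range] at hi
    rw [List.getD_append _ _ _ _ hi]
  · have h1 : ∀ i ∈ List.range v.length,
        ((fun i => decide ((u ++ v).getD i 0 ≠ 0)) ∘ (fun x => u.length + x)) i
          = decide (v.getD i 0 ≠ 0) := by
      intro i hi
      simp only [Function.comp]
      rw [List.getD_append_right _ _ _ _ (by omega)]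
      simp
    rw [List.filter_congr h1]
    exact List.map_congr_left (fun i _ => Nat.add_comm u.length i)

lemma nzPos_blk (q : ℕ × ℕ) (h : 0 < q.1) : nzPos (blk q) = [0] := by
  unfold nzPos blk
  simp only [List.length_cons, List.length_replicate]
  rw [List.range_succ_eq_map, List.filter_cons, List.filter_map]
  have h1 : (List.range (q.2 - 1)).filter
      ((fun i => decide ((q.1 :: List.replicate (q.2-1) 0).getD i 0 ≠ 0)) ∘ Nat.succ) = [] := by
    apply List.filter_eq_nil_iff.2
    intro i _
    simp only [Function.comp, List.getD_cons_succ, decide_not]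
    simp [getD_replicate_zero]
  rw [h1]
  simp [h.ne']

lemma nzPos_build (p : List (ℕ × ℕ)) (hpos : ∀ q ∈ p, 0 < q.1 ∧ 0 < q.2) :
    nzPos (build p) = offs p := by
  induction p with
  | nil => rfl
  | cons q p ih =>
    have hq := hpos q (by simp)
    rw [build, offs, nzPos_append, nzPos_blk q hq.1, blk_length q hq.2,
      ih (fun r hr => hpos r (by simp [hr]))]
    rfl

lemma build_length (p : List (ℕ × ℕ)) (hpos : ∀ q ∈ p, 0 < q.1 ∧ 0 < q.2) :
    (build p).length = (p.map Prod.snd).sum := by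
  induction p with
  | nil => rfl
  | cons q p ih =>
    have hq := hpos q (by simp)
    rw [build, List.length_append, blk_length q hq.2, ih (fun r hr => hpos r (by simp [hr]))]
    simp

lemma build_sum (p : List (ℕ × ℕ)) : (build p).sum = (p.map Prod.fst).sum := by
  induction p with
  | nil => rfl
  | cons q p ih => rw [build, List.sum_append, ih]; simp [blk]

lemma offs_length (p : List (ℕ × ℕ)) : (offs p).length = p.length := by
  induction p with
  | nil => rfl
  | cons q p ih => simp [offs, ih]

lemma offs_getD (p : List (ℕ × ℕ)) (j : ℕ) (hj : j < p.length) :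
    (offs p).getD j 0 = ((p.take j).map Prod.snd).sum := by
  induction p generalizing j with
  | nil => simp at hj
  | cons q p ih =>
    cases j with
    | zero => simp [offs]
    | succ j =>
      simp only [offs, List.getD_cons_succ]
      have hj' : j < p.length := by simpa using hj
      have : ((offs p).map (· + q.2)).getD j 0 = (offs p).getD j 0 + q.2 := by
        rw [List.getD_eq_getElem _ _ (by simp [offs_length]; omega),
          List.getD_eq_getElem _ _ (by simp [offs_length]; omega)]
        simp
      rw [this, ih j hj']
      simp [Nat.add_comm]

lemma build_getD (p : List (ℕ × ℕ)) (hpos : ∀ q ∈ p, 0 < q.1 ∧ 0 < q.2)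
    (j : ℕ) (hj : j < p.length) :
    (build p).getD (((p.take j).map Prod.snd).sum) 0 = (p.getD j (0,0)).1 := by
  induction p generalizing j with
  | nil => simp at hj
  | cons q p ih =>
    cases j with
    | zero => simp [build, blk]
    | succ j =>
      have hq := hpos q (by simp)
      have hj' : j < p.length := by simpa using hj
      simp only [List.take_succ_cons, List.map_cons, List.sum_cons, build, List.getD_cons_succ]
      rw [show q.2 + ((p.take j).map Prod.snd).sum
          = (blk q).length + ((p.take j).map Prod.snd).sum by rw [blk_length q hq.2],
        List.getD_append_right _ _ _ _ (by omega)]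
      rw [Nat.add_sub_cancel_left]
      exact ih (fun r hr => hpos r (by simp [hr])) j hj'

lemma sum_take_lt (p : List (ℕ × ℕ)) (hpos : ∀ q ∈ p, 0 < q.1 ∧ 0 < q.2)
    (j : ℕ) (hj : j < p.length) :
    ((p.take j).map Prod.snd).sum + (p.getD j (0,0)).2 ≤ (p.map Prod.snd).sum := by
  have h1 : p = p.take j ++ p.drop j := (List.take_append_drop j p).symm
  have h2 : p.drop j = p.getD j (0,0) :: p.drop (j+1) := by
    rw [List.getD_eq_getElem _ _ hj, List.drop_eq_getElem_cons hj]
  calc ((p.take j).map Prod.snd).sum + (p.getD j (0,0)).2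
      ≤ ((p.take j).map Prod.snd).sum + ((p.drop j).map Prod.snd).sum := by
        rw [h2]; simp
    _ = (p.map Prod.snd).sum := by rw [← List.sum_append, ← List.map_append,
        List.take_append_drop]

lemma take_succ_sum (p : List (ℕ × ℕ)) (j : ℕ) (hj : j < p.length) :
    ((p.take (j+1)).map Prod.snd).sum
      = ((p.take j).map Prod.snd).sum + (p.getD j (0,0)).2 := by
  rw [List.map_take, List.map_take, List.sum_take_succ _ j (by simpa), List.getElem_map,
    List.getD_eq_getElem _ _ hj]

lemma pairsOf_build (p : List (ℕ × ℕ)) (hne : p ≠ [])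
    (hpos : ∀ q ∈ p, 0 < q.1 ∧ 0 < q.2) : pairsOf (build p) = p := by
  have hnz : nzPos (build p) = offs p := nzPos_build p hpos
  have hlen : (nzPos (build p)).length = p.length := by rw [hnz, offs_length]
  apply List.ext_getElem
  · simp [pairsOf, hlen]
  intro j hj hj'
  simp only [pairsOf, List.getElem_map, List.getElem_range]
  rw [hnz]
  have hjp : j < p.length := by simpa [pairsOf, hlen] using hj
  have e1 : (build p).getD ((offs p).getD j 0) 0 = (p.getD j (0,0)).1 := by
    rw [offs_getD p j hjp]; exact build_getD p hpos j hjp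
  have e2 : (if j + 1 = (offs p).length then
        (offs p).getD 0 0 + (build p).length - (offs p).getD j 0
      else (offs p).getD (j+1) 0 - (offs p).getD j 0) = (p.getD j (0,0)).2 := by
    rw [offs_length]
    split
    · next h =>
      have h0 : 0 < p.length := by omega
      rw [offs_getD p 0 h0, offs_getD p j hjp, build_length p hpos]
      simp only [List.take_zero, List.map_nil, List.sum_nil, Nat.zero_add]
      have h1 : (p.map Prod.snd).sum = ((p.take j).map Prod.snd).sum + (p.getD j (0,0)).2 := by
        have := take_succ_sum p j hjp
        rw [show j + 1 = p.length from h, List.take_length] at this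
        exact this
      omega
    · next h =>
      have hj1 : j + 1 < p.length := by omega
      rw [offs_getD p (j+1) hj1, offs_getD p j hjp, take_succ_sum p j hjp]
      omega
  rw [e1, e2, List.getD_eq_getElem _ _ hjp]

/-- Any finite sequence of pairs of positive integers whose first coordinates sum to `t` and
whose second coordinates sum to `s` is, up to cyclic permutation, the pair sequence of some
vector in `Row(s,t)`. -/
theorem exists_row_of_pairs (s t : ℕ) (hs : 1 ≤ s) (ht : 1 ≤ t)
    (p : List (ℕ × ℕ)) (hne : p ≠ [])
    (hpos : ∀ q ∈ p, 0 < q.1 ∧ 0 < q.2)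
    (hsum1 : (p.map Prod.fst).sum = t) (hsum2 : (p.map Prod.snd).sum = s) :
    ∃ w : List ℕ, w.length = s ∧ w.sum = t ∧ pairsOf w ~r p := by
  refine ⟨build p, ?_, ?_, ?_⟩
  · rw [build_length p hpos, hsum2]
  · rw [build_sum p, hsum1]
  · rw [pairsOf_build p hne hpos]
end

section
/- Let s, t ≥ 1 be natural numbers. For every w ∈ Row(s,t), applying the complement operation twice returns the original class: (⟨w⟩^c)^c = ⟨w⟩. -/
/-- The complemented pair sequence: `((a₀,b₀),...,(a_k,b_k)) ↦ ((b₀,a₁),(b₁,a₂),...,(b_k,a₀))`. -/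
def complPairs (p : List (ℕ × ℕ)) : List (ℕ × ℕ) :=
  (p.map Prod.snd).zip ((p.map Prod.fst).rotate 1)

/-- `v` is a complement of `w`: `v ∈ Row(t,s)` (where `w ∈ Row(s,t)`) and the pair sequence
of `v` is a cyclic permutation of the complemented pair sequence of `w`. -/
def IsComplementOf (w v : List ℕ) : Prop :=
  v.length = w.sum ∧ v.sum = w.length ∧ pairsOf v ~r complPairs (pairsOf w)

lemma nzPos_nil : nzPos [] = [] := rfl

lemma nzPos_cons (a : ℕ) (w : List ℕ) :
    nzPos (a :: w) = (if a = 0 then [] else [0]) ++ (nzPos w).map (· + 1) := by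
  unfold nzPos
  rw [List.length_cons, List.range_succ_eq_map, List.filter_cons, List.filter_map]
  have h1 : ((fun i => decide ((a :: w).getD i 0 ≠ 0)) ∘ Nat.succ)
      = fun i => decide (w.getD i 0 ≠ 0) := by
    funext i; simp [List.getD_cons_succ]
  rw [h1]
  by_cases ha : a = 0 <;> simp [ha, Nat.succ_eq_add_one]

lemma nzPos_lt (w : List ℕ) : ∀ i ∈ nzPos w, i < w.length := by
  intro i hi
  have := List.mem_filter.mp hi
  exact List.mem_range.mp this.1

lemma nzPos_getD_lt (w : List ℕ) {j : ℕ} (hj : j < (nzPos w).length) :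
    (nzPos w).getD j 0 < w.length := by
  rw [List.getD_eq_getElem _ _ hj]
  exact nzPos_lt w _ (List.getElem_mem hj)

lemma nzPos_replicate_append (c : ℕ) (v : List ℕ) :
    nzPos (List.replicate c 0 ++ v) = (nzPos v).map (· + c) := by
  induction c with
  | zero => simp
  | succ c ih =>
      rw [List.replicate_succ, List.cons_append, nzPos_cons, ih]
      simp only [List.map_map, Function.comp]
      apply List.map_congr_left
      intro i _
      simp; omega

lemma pairsOf_nil : pairsOf [] = [] := rfl

lemma getD_map_nat (f : ℕ → ℕ) {l : List ℕ} {j : ℕ} (hj : j < l.length) (d d' : ℕ) :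
    (l.map f).getD j d = f (l.getD j d') := by
  rw [List.getD_eq_getElem _ _ (by simpa using hj), List.getD_eq_getElem _ _ hj,
    List.getElem_map]

lemma getD_cons_replicate (a : ℕ) (c : ℕ) (v : List ℕ) (m : ℕ) :
    (a :: (List.replicate c 0 ++ v)).getD (m + (c + 1)) 0 = v.getD m 0 := by
  have h : m + (c + 1) = (m + c) + 1 := by omega
  rw [h, List.getD_cons_succ, List.getD_append_right _ _ _ _ (by simp)]
  simp

lemma nzPos_cons_pos_rep (a : ℕ) (ha : a ≠ 0) (c : ℕ) (v : List ℕ) :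
    nzPos (a :: (List.replicate c 0 ++ v)) = 0 :: (nzPos v).map (· + (c + 1)) := by
  rw [nzPos_cons, if_neg ha, nzPos_replicate_append, List.map_map]
  simp only [List.singleton_append, List.cons.injEq, true_and]
  apply List.map_congr_left
  intro i _
  simp; omega

lemma pairsOf_cons_pos (a : ℕ) (ha : a ≠ 0) (c : ℕ) (v : List ℕ)
    (hv : v = [] ∨ v.getD 0 0 ≠ 0) :
    pairsOf (a :: (List.replicate c 0 ++ v)) = (a, c + 1) :: pairsOf v := by
  have N := nzPos_cons_pos_rep a ha c v
  have hlw : (a :: (List.replicate c 0 ++ v)).length = c + 1 + v.length := by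
    simp; omega
  rcases hv with rfl | hv0
  · rw [nzPos_nil] at N
    simp only [List.map_nil, List.append_nil] at N ⊢
    simp [pairsOf, N, pairsOf_nil, nzPos_nil]
  · have hQ0 : (nzPos v).getD 0 0 = 0 := by
      cases v with
      | nil => simp at hv0
      | cons b v' =>
          have hb : b ≠ 0 := by simpa using hv0
          rw [nzPos_cons, if_neg hb]; simp
    have hk : 0 < (nzPos v).length := by
      cases v with
      | nil => simp at hv0
      | cons b v' =>
          have hb : b ≠ 0 := by simpa using hv0
          rw [nzPos_cons, if_neg hb]; simp
    have hlen : (0 :: (nzPos v).map (· + (c + 1))).length = (nzPos v).length + 1 := by simp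
    apply List.ext_getElem
    · simp [pairsOf, N]
    · intro j h1 h2
      have hjk : j < (nzPos v).length + 1 := by simpa [pairsOf, N] using h1
      cases j with
      | zero =>
          simp only [pairsOf, N, List.getElem_map, List.getElem_range,
            List.getElem_cons_zero]
          have hg0 : (0 :: (nzPos v).map (· + (c + 1))).getD 0 0 = 0 := rfl
          have hg1 : (0 :: (nzPos v).map (· + (c + 1))).getD 1 0 = c + 1 := by
            rw [List.getD_cons_succ, getD_map_nat _ hk 0 0, hQ0]
            omega
          rw [hlen, hg0, hg1, if_neg (by omega)]
          simp
      | succ i =>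
          have hik : i < (nzPos v).length := by omega
          simp only [pairsOf, N, List.getElem_cons_succ, List.getElem_map,
            List.getElem_range]
          have hgi : (0 :: (nzPos v).map (· + (c + 1))).getD (i + 1) 0
              = (nzPos v).getD i 0 + (c + 1) := by
            rw [List.getD_cons_succ, getD_map_nat _ hik 0 0]
          have hentry : (a :: (List.replicate c 0 ++ v)).getD
              ((nzPos v).getD i 0 + (c + 1)) 0 = v.getD ((nzPos v).getD i 0) 0 :=
            getD_cons_replicate a c v _
          rw [hlen, hgi, hentry]
          by_cases hlast : i + 1 = (nzPos v).length
          · rw [if_pos (by omega), if_pos hlast]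
            have hg0 : (0 :: (nzPos v).map (· + (c + 1))).getD 0 0 = 0 := rfl
            rw [hg0, hlw, hQ0]
            simp only [Prod.mk.injEq, true_and]
            omega
          · rw [if_neg (by omega), if_neg hlast]
            have hi1k : i + 1 < (nzPos v).length := by omega
            have hgi1 : (0 :: (nzPos v).map (· + (c + 1))).getD (i + 1 + 1) 0
                = (nzPos v).getD (i + 1) 0 + (c + 1) := by
              rw [List.getD_cons_succ, getD_map_nat _ hi1k 0 0]
            rw [hgi1]
            simp only [Prod.mk.injEq, true_and]
            omega

def addLast (c : ℕ) : List (ℕ × ℕ) → List (ℕ × ℕ)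
  | [] => []
  | [x] => [(x.1, x.2 + c)]
  | x :: y :: p => x :: addLast c (y :: p)

lemma addLast_length (c : ℕ) (p : List (ℕ × ℕ)) : (addLast c p).length = p.length := by
  induction p with
  | nil => rfl
  | cons x p ih =>
      cases p with
      | nil => rfl
      | cons y q => simpa [addLast] using ih

lemma addLast_getD (c : ℕ) (p : List (ℕ × ℕ)) (j : ℕ) (hj : j < p.length) :
    (addLast c p).getD j (0, 0) =
      if j + 1 = p.length then ((p.getD j (0, 0)).1, (p.getD j (0, 0)).2 + c)
      else p.getD j (0, 0) := by
  induction p generalizing j with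
  | nil => simp at hj
  | cons x p ih =>
      cases p with
      | nil =>
          cases j with
          | zero => simp [addLast]
          | succ i => simp at hj
      | cons y q =>
          cases j with
          | zero =>
              simp [addLast, if_neg (by simp : ¬ (0 + 1 = (x :: y :: q).length))]
          | succ i =>
              have hi : i < (y :: q).length := by simpa using hj
              simp only [addLast, List.getD_cons_succ]
              rw [ih i hi]
              simp only [List.length_cons]
              by_cases h : i + 1 = q.length + 1
              · rw [if_pos h, if_pos (by omega)]
              · rw [if_neg h, if_neg (by omega)]

lemma pairsOf_getElem (w : List ℕ) (j : ℕ) (hj : j < (pairsOf w).length) :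
    (pairsOf w)[j] = (w.getD ((nzPos w).getD j 0) 0,
      if j + 1 = (nzPos w).length then (nzPos w).getD 0 0 + w.length - (nzPos w).getD j 0
      else (nzPos w).getD (j + 1) 0 - (nzPos w).getD j 0) := by
  unfold pairsOf at hj ⊢
  rw [List.getElem_map, List.getElem_range]

lemma pairsOf_length (w : List ℕ) : (pairsOf w).length = (nzPos w).length := by
  simp [pairsOf]

lemma pairsOf_cons_zero_s3 (w : List ℕ) : pairsOf (0 :: w) = addLast 1 (pairsOf w) := by
  have N : nzPos (0 :: w) = (nzPos w).map (· + 1) := by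
    rw [nzPos_cons, if_pos rfl, List.nil_append]
  apply List.ext_getElem
  · simp [pairsOf_length, N, addLast_length]
  · intro j h1 h2
    have hjk : j < (nzPos w).length := by
      have := h1; rw [pairsOf_length, N, List.length_map] at this; exact this
    rw [pairsOf_getElem _ _ h1,
      ← List.getD_eq_getElem (addLast 1 (pairsOf w)) (0, 0) h2,
      addLast_getD 1 (pairsOf w) j (by rw [pairsOf_length]; exact hjk),
      List.getD_eq_getElem (pairsOf w) (0, 0) (by rw [pairsOf_length]; exact hjk),
      pairsOf_getElem w j (by rw [pairsOf_length]; exact hjk),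
      pairsOf_length, N]
    have hgj : ((nzPos w).map (· + 1)).getD j 0 = (nzPos w).getD j 0 + 1 :=
      getD_map_nat _ hjk 0 0
    rw [hgj]
    have hentry : (0 :: w).getD ((nzPos w).getD j 0 + 1) 0 = w.getD ((nzPos w).getD j 0) 0 :=
      List.getD_cons_succ
    rw [List.length_map, hentry]
    have hb := nzPos_getD_lt w hjk
    have hg0 : ((nzPos w).map (· + 1)).getD 0 0 = (nzPos w).getD 0 0 + 1 :=
      getD_map_nat _ (by omega) 0 0
    split_ifs with hlast
    · rw [hg0, Prod.ext_iff]
      constructor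
      · rfl
      · dsimp only
        simp only [List.length_cons]
        omega
    · have hj1 : j + 1 < (nzPos w).length := by omega
      rw [getD_map_nat (· + 1) hj1 0 0, Prod.ext_iff]
      constructor
      · rfl
      · dsimp only
        omega

def lz : List ℕ → ℕ
  | [] => 0
  | (a :: w) => if a = 0 then lz w + 1 else 0

def recon (p : List (ℕ × ℕ)) : List ℕ :=
  p.flatMap (fun x => x.1 :: List.replicate (x.2 - 1) 0)

lemma recon_append (p q : List (ℕ × ℕ)) : recon (p ++ q) = recon p ++ recon q :=
  List.flatMap_append (xs := p) (ys := q)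

lemma lz_le (w : List ℕ) : lz w ≤ w.length := by
  induction w with
  | nil => simp [lz]
  | cons a w ih => by_cases h : a = 0 <;> simp [lz, h] <;> omega

lemma take_lz (w : List ℕ) : w.take (lz w) = List.replicate (lz w) 0 := by
  induction w with
  | nil => simp [lz]
  | cons a w ih =>
      by_cases h : a = 0
      · subst h; simp [lz, List.replicate_succ, ih]
      · simp [lz, h]

lemma lz_split (w : List ℕ) : w = List.replicate (lz w) 0 ++ w.drop (lz w) := by
  conv_lhs => rw [← List.take_append_drop (lz w) w]
  rw [take_lz]

lemma lz_drop_head (w : List ℕ) :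
    w.drop (lz w) = [] ∨ (w.drop (lz w)).getD 0 0 ≠ 0 := by
  induction w with
  | nil => left; simp
  | cons a w ih =>
      by_cases h : a = 0
      · subst h; simpa [lz] using ih
      · right; simp [lz, h]

lemma recon_pairsOf_head (n : ℕ) : ∀ v : List ℕ, v.length ≤ n →
    (v = [] ∨ v.getD 0 0 ≠ 0) → recon (pairsOf v) = v := by
  induction n with
  | zero =>
      intro v hv _
      have : v = [] := List.eq_nil_of_length_eq_zero (by omega)
      subst this; rfl
  | succ n ih =>
      intro v hv hd
      rcases hd with rfl | hd
      · rfl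
      · cases v with
        | nil => simp at hd
        | cons a w =>
            have ha : a ≠ 0 := by simpa using hd
            have hw := lz_split w
            have hlz := lz_le w
            rw [show a :: w = a :: (List.replicate (lz w) 0 ++ w.drop (lz w)) by rw [← hw]]
            rw [pairsOf_cons_pos a ha (lz w) (w.drop (lz w)) (lz_drop_head w)]
            have hrec : recon (pairsOf (w.drop (lz w))) = w.drop (lz w) := by
              apply ih
              · simp at hv ⊢; omega
              · exact lz_drop_head w
            show recon ([(a, lz w + 1)] ++ pairsOf (w.drop (lz w))) = _
            rw [recon_append, hrec]
            simp [recon]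

lemma pairsOf_snd_pos (n : ℕ) : ∀ w : List ℕ, w.length ≤ n →
    ∀ x ∈ pairsOf w, 1 ≤ x.2 := by
  induction n with
  | zero =>
      intro w hw x hx
      have : w = [] := List.eq_nil_of_length_eq_zero (by omega)
      subst this; simp [pairsOf_nil] at hx
  | succ n ih =>
      intro w hw x hx
      cases w with
      | nil => simp [pairsOf_nil] at hx
      | cons a w' =>
          by_cases ha : a = 0
          · subst ha
            rw [pairsOf_cons_zero_s3] at hx
            -- membership in addLast
            have key : ∀ p : List (ℕ × ℕ), (∀ y ∈ p, 1 ≤ y.2) →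
                ∀ z ∈ addLast 1 p, 1 ≤ z.2 := by
              intro p
              induction p with
              | nil => intro _ z hz; simp [addLast] at hz
              | cons u p ihp =>
                  intro hp z hz
                  cases p with
                  | nil =>
                      simp [addLast] at hz
                      subst hz
                      simp
                  | cons y q =>
                      simp only [addLast, List.mem_cons] at hz
                      rcases hz with rfl | hz
                      · exact hp _ (by simp)
                      · exact ihp (fun y hy => hp y (by simp [hy])) z hz
            exact key (pairsOf w') (ih w' (by simpa using hw)) x hx
          · have hw' := lz_split w'
            rw [show a :: w' = a :: (List.replicate (lz w') 0 ++ w'.drop (lz w')) by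
              rw [← hw']] at hx
            rw [pairsOf_cons_pos a ha (lz w') (w'.drop (lz w')) (lz_drop_head w')] at hx
            rcases List.mem_cons.mp hx with rfl | hx'
            · simp
            · exact ih (w'.drop (lz w')) (by simp at hw ⊢; omega) x hx'

lemma pairsOf_ne_nil (w : List ℕ) (hw : w.sum ≠ 0) : pairsOf w ≠ [] := by
  have : ∃ i, i < w.length ∧ w.getD i 0 ≠ 0 := by
    induction w with
    | nil => simp at hw
    | cons a w ih =>
        by_cases ha : a = 0
        · subst ha
          obtain ⟨i, hi, hne⟩ := ih (by simpa using hw)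
          exact ⟨i + 1, by simpa using hi, by simpa using hne⟩
        · exact ⟨0, by simp, by simpa using ha⟩
  obtain ⟨i, hi, hne⟩ := this
  have : i ∈ nzPos w := by
    unfold nzPos
    rw [List.mem_filter]
    exact ⟨List.mem_range.mpr hi, by simpa using hne⟩
  intro h
  have hlen : (nzPos w).length = 0 := by
    have := pairsOf_length w
    rw [h] at this
    simpa using this.symm
  rw [List.length_eq_zero_iff.mp hlen] at this
  simp at this

lemma recon_addLast (c : ℕ) (p : List (ℕ × ℕ)) (hp : p ≠ [])
    (hpos : ∀ y ∈ p, 1 ≤ y.2) :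
    recon (addLast c p) = recon p ++ List.replicate c 0 := by
  induction p with
  | nil => simp at hp
  | cons x p ih =>
      cases p with
      | nil =>
          have hx : 1 ≤ x.2 := hpos x (by simp)
          simp only [addLast, recon, List.flatMap_cons, List.flatMap_nil]
          simp only [List.append_nil]
          rw [show x.2 + c - 1 = (x.2 - 1) + c by omega, List.replicate_add]
          simp
      | cons y q =>
          simp only [addLast]
          show recon ([x] ++ addLast c (y :: q)) = recon ([x] ++ (y :: q)) ++ _
          rw [recon_append, recon_append,
            ih (by simp) (fun z hz => hpos z (by simp [hz]))]
          simp [List.append_assoc]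

lemma recon_pairsOf (n : ℕ) : ∀ w : List ℕ, w.length ≤ n → w.sum ≠ 0 →
    recon (pairsOf w) = w.drop (lz w) ++ List.replicate (lz w) 0 := by
  induction n with
  | zero =>
      intro w hw hs
      have : w = [] := List.eq_nil_of_length_eq_zero (by omega)
      subst this; simp at hs
  | succ n ih =>
      intro w hw hs
      cases w with
      | nil => simp at hs
      | cons a w' =>
          by_cases ha : a = 0
          · subst ha
            have hs' : w'.sum ≠ 0 := by simpa using hs
            rw [pairsOf_cons_zero_s3,
              recon_addLast 1 (pairsOf w') (pairsOf_ne_nil w' hs')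
                (pairsOf_snd_pos w'.length w' le_rfl),
              ih w' (by simpa using hw) hs']
            have hlz : lz (0 :: w') = lz w' + 1 := by simp [lz]
            rw [hlz, List.drop_succ_cons, List.replicate_succ' (n := lz w') (a := 0)]
            simp [List.append_assoc]
          · rw [recon_pairsOf_head (a :: w').length (a :: w') le_rfl
              (Or.inr (by simpa using ha))]
            simp [lz, ha]

lemma zip_rotate {α β : Type*} (A : List α) (B : List β) (h : A.length = B.length)
    (n : ℕ) : (A.rotate n).zip (B.rotate n) = (A.zip B).rotate n := by
  induction n generalizing A B with
  | zero => simp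
  | succ n ihn =>
      cases A with
      | nil =>
          have : B = [] := List.eq_nil_of_length_eq_zero (by simpa using h.symm)
          subst this; simp
      | cons a A' =>
          cases B with
          | nil => simp at h
          | cons b B' =>
              have h' : A'.length = B'.length := by simpa using h
              rw [List.zip_cons_cons, List.rotate_cons_succ, List.rotate_cons_succ,
                List.rotate_cons_succ, ihn (A' ++ [a]) (B' ++ [b]) (by simp [h']),
                List.zip_append h']
              rfl

lemma complPairs_rotate (p : List (ℕ × ℕ)) (n : ℕ) :
    complPairs (p.rotate n) = (complPairs p).rotate n := by
  unfold complPairs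
  rw [List.map_rotate, List.map_rotate, List.rotate_rotate, Nat.add_comm n 1,
    ← List.rotate_rotate, zip_rotate]
  simp

lemma complPairs_complPairs (p : List (ℕ × ℕ)) :
    complPairs (complPairs p) = p.rotate 1 := by
  unfold complPairs
  have hlen : (p.map Prod.snd).length = ((p.map Prod.fst).rotate 1).length := by simp
  rw [List.map_snd_zip (le_of_eq hlen.symm), List.map_fst_zip (le_of_eq hlen)]
  rw [zip_rotate _ _ (by simp) 1, List.zip_map']
  simp

lemma recon_isRotated {p q : List (ℕ × ℕ)} (h : p ~r q) : recon p ~r recon q := by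
  obtain ⟨n, rfl⟩ := h
  rcases Nat.eq_zero_or_pos p.length with hp | hp
  · have : p = [] := List.eq_nil_of_length_eq_zero hp
    subst this
    rw [List.rotate_nil]
  · have hm : n % p.length ≤ p.length := le_of_lt (Nat.mod_lt _ hp)
    rw [← List.rotate_mod, List.rotate_eq_drop_append_take hm, recon_append]
    calc recon p = recon (p.take (n % p.length) ++ p.drop (n % p.length)) := by
          rw [List.take_append_drop]
      _ = recon (p.take (n % p.length)) ++ recon (p.drop (n % p.length)) := recon_append _ _
      _ ~r recon (p.drop (n % p.length)) ++ recon (p.take (n % p.length)) :=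
          List.isRotated_append

lemma isRotated_recon_pairsOf (w : List ℕ) (hw : w.sum ≠ 0) :
    w ~r recon (pairsOf w) := by
  rw [recon_pairsOf w.length w le_rfl hw]
  rw [← take_lz w]
  exact ⟨lz w, List.rotate_eq_drop_append_take (lz_le w)⟩

/-- Applying the complement operation twice returns the original cyclic class:
`(⟨w⟩ᶜ)ᶜ = ⟨w⟩`. -/
theorem complement_complement (s t : ℕ) (hs : 1 ≤ s) (ht : 1 ≤ t)
    (w : List ℕ) (hlen : w.length = s) (hsum : w.sum = t)
    (v : List ℕ) (hv : IsComplementOf w v)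
    (u : List ℕ) (hu : IsComplementOf v u) :
    u ~r w := by
  obtain ⟨hvl, hvs, hvp⟩ := hv
  obtain ⟨hul, hus, hup⟩ := hu
  have hwsum : w.sum ≠ 0 := by omega
  have husum : u.sum ≠ 0 := by rw [hus, hvl]; omega
  -- pairsOf u ~r pairsOf w
  have h1 : complPairs (pairsOf v) ~r complPairs (complPairs (pairsOf w)) := by
    obtain ⟨n, hn⟩ := hvp
    exact ⟨n, by rw [← hn, complPairs_rotate]⟩
  have h2 : complPairs (complPairs (pairsOf w)) ~r pairsOf w := by
    rw [complPairs_complPairs]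
    exact List.IsRotated.symm ⟨1, rfl⟩
  have hpu : pairsOf u ~r pairsOf w := (hup.trans h1).trans h2
  exact ((isRotated_recon_pairsOf u husum).trans (recon_isRotated hpu)).trans
    (isRotated_recon_pairsOf w hwsum).symm
end
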